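/- Let P : ℝ³ → ℝ be a polynomial function. If there exist s > 0 and 0 ≤ δ < 3 such that ∫_{ℝ³} |P(x)|^s (1+|x|)^{−δ} dx < +∞, then P is identically zero. -/

import Mathlib

open MeasureTheory Filter Metric Real
open scoped Topology ENNReal

noncomputable section

/-- Three-dimensional Euclidean space. -/
abbrev E3 : Type := EuclideanSpace ℝ (Fin 3)

namespace PolyWeightedAux

open MvPolynomial

/-- The evaluation of a multivariate polynomial is measurable. -/
lemma measurable_eval {n : ℕ} (p : MvPolynomial (Fin n) ℝ) :
    Measurable fun x : Fin n → ℝ => eval x p :=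
  (MvPolynomial.continuous_eval p).measurable

/-- A nonzero polynomial is a.e. nonvanishing (w.r.t. Lebesgue measure on the pi space). -/
lemma ae_eval_ne_zero : ∀ {n : ℕ} (p : MvPolynomial (Fin n) ℝ), p ≠ 0 →
    ∀ᵐ x ∂(volume : Measure (Fin n → ℝ)), eval x p ≠ 0 := by
  intro n
  induction n with
  | zero =>
    intro p hp
    obtain ⟨c, rfl⟩ := MvPolynomial.C_surjective (Fin 0) p
    refine Eventually.of_forall fun x => ?_
    have hc : c ≠ 0 := fun h => hp (by rw [h, map_zero])
    simpa using hc
  | succ n ih =>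
    intro p hp
    have hF : finSuccEquiv ℝ n p ≠ 0 := by
      intro h
      apply hp
      have := congrArg (finSuccEquiv ℝ n).symm h
      simpa using this
    set F := finSuccEquiv ℝ n p with hFdef
    have hlc : F.leadingCoeff ≠ 0 := Polynomial.leadingCoeff_ne_zero.mpr hF
    have IH := ih F.leadingCoeff hlc
    -- the combined evaluation function on the product space
    set φf : ℝ × (Fin n → ℝ) → ℝ := fun q => eval (Fin.cons q.1 q.2) p with hφf
    have hcons : Measurable fun q : ℝ × (Fin n → ℝ) => (Fin.cons q.1 q.2 : Fin (n+1) → ℝ) := by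
      refine measurable_pi_iff.mpr fun i => ?_
      refine Fin.cases ?_ (fun j => ?_) i
      · simpa using measurable_fst
      · simp only [Fin.cons_succ]; exact (measurable_pi_apply j).comp measurable_snd
    have hφmeas : Measurable φf := (measurable_eval p).comp hcons
    have hkey : ∀ (a : ℝ) (y : Fin n → ℝ),
        φf (a, y) = Polynomial.eval a (Polynomial.map (eval y) F) := fun a y =>
      eval_eq_eval_mv_eval' y a p
    have hs1 : MeasurableSet {q : ℝ × (Fin n → ℝ) | φf q ≠ 0} :=
      (hφmeas (measurableSet_singleton 0)).compl
    have hs2 : MeasurableSet {q : (Fin n → ℝ) × ℝ | φf (Prod.swap q) ≠ 0} :=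
      ((hφmeas.comp measurable_swap) (measurableSet_singleton 0)).compl
    have hprod : ∀ᵐ q ∂((volume : Measure ℝ).prod (volume : Measure (Fin n → ℝ))), φf q ≠ 0 := by
      rw [← Measure.prod_swap]
      refine (ae_map_iff measurable_swap.aemeasurable hs1).mpr ?_
      refine (Measure.ae_prod_iff_ae_ae hs2).mpr ?_
      filter_upwards [IH] with y hy
      have hg : Polynomial.map (eval y) F ≠ 0 := by
        intro h
        have h2 : (Polynomial.map (eval y) F).coeff F.natDegree = 0 := by rw [h]; simp
        rw [Polynomial.coeff_map] at h2
        exact hy h2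
      have hfin := Polynomial.finite_setOf_isRoot hg
      filter_upwards [hfin.countable.ae_notMem (μ := volume)] with a ha
      show φf (Prod.swap (y, a)) ≠ 0
      rw [Prod.swap_prod_mk, hkey a y]
      exact fun h => ha h
    -- transfer to the pi space
    have mp := (measurePreserving_piFinSuccAbove (fun _ : Fin (n+1) => (volume : Measure ℝ)) 0).symm
    have hset : MeasurableSet {x : Fin (n+1) → ℝ | eval x p ≠ 0} :=
      ((measurable_eval p) (measurableSet_singleton 0)).compl
    rw [MeasureTheory.volume_pi, ← mp.map_eq]
    refine (ae_map_iff (MeasurableEquiv.measurable _).aemeasurable hset).mpr ?_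
    rw [MeasureTheory.volume_pi] at hprod
    filter_upwards [hprod] with q hq
    obtain ⟨a, y⟩ := q
    have he : (MeasurableEquiv.piFinSuccAbove (fun _ : Fin (n+1) => ℝ) 0).symm (a, y)
        = Fin.cons a y := by
      simp only [MeasurableEquiv.piFinSuccAbove, MeasurableEquiv.symm_mk,
        MeasurableEquiv.coe_mk, Equiv.symm_symm, Fin.insertNthEquiv_zero]
      rfl
    show eval ((MeasurableEquiv.piFinSuccAbove (fun _ : Fin (n+1) => ℝ) 0).symm (a, y)) p ≠ 0
    rw [he]
    exact hq

/-- A nonzero polynomial is a.e. nonvanishing on Euclidean space. -/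
lemma ae_eval_ne_zero_E3 (p : MvPolynomial (Fin 3) ℝ) (hp : p ≠ 0) :
    ∀ᵐ x ∂(volume : Measure E3), eval (fun i => x i) p ≠ 0 := by
  have mp := (EuclideanSpace.volume_preserving_symm_measurableEquiv_toLp (Fin 3)).symm
  rw [← mp.map_eq]
  have hset : MeasurableSet {x : E3 | eval (fun i => x i) p ≠ 0} :=
    (((measurable_eval p).comp
      (MeasurableEquiv.toLp 2 (Fin 3 → ℝ)).symm.measurable) (measurableSet_singleton 0)).compl
  refine (ae_map_iff (MeasurableEquiv.measurable _).aemeasurable hset).mpr ?_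
  filter_upwards [ae_eval_ne_zero p hp] with y hy
  exact hy

/-- Evaluation of a homogeneous polynomial at a scaled point. -/
lemma eval_homog {n k : ℕ} {φ : MvPolynomial (Fin n) ℝ} (hφ : φ.IsHomogeneous k)
    (t : ℝ) (x : Fin n → ℝ) : eval (fun i => t * x i) φ = t ^ k * eval x φ := by
  rw [eval_eq', eval_eq', Finset.mul_sum]
  refine Finset.sum_congr rfl fun d hd => ?_
  have hdeg : ∑ i, d i = k := by
    have h1 : Finsupp.weight 1 d = k := hφ (mem_support_iff.mp hd)
    have h2 : d.degree = k := by rw [Finsupp.degree_eq_weight_one]; exact h1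
    have h3 : d.degree = ∑ i ∈ d.support, d i := rfl
    rw [← h2, h3]
    exact (Finset.sum_subset (Finset.subset_univ _)
      (fun i _ hi => Finsupp.notMem_support_iff.mp hi)).symm
  calc coeff d φ * ∏ i, (t * x i) ^ d i
      = coeff d φ * ((∏ i, t ^ d i) * ∏ i, x i ^ d i) := by
        rw [← Finset.prod_mul_distrib]; simp_rw [mul_pow]
    _ = coeff d φ * (t ^ (∑ i, d i) * ∏ i, x i ^ d i) := by
        rw [Finset.prod_pow_eq_pow_sum]
    _ = t ^ k * (coeff d φ * ∏ i, x i ^ d i) := by rw [hdeg]; ring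

variable (Q : MvPolynomial (Fin 3) ℝ)

/-- The single-variable polynomial `t ↦ Q(t • x)`. -/
def pX (x : Fin 3 → ℝ) : Polynomial ℝ :=
  ∑ k ∈ Finset.range (Q.totalDegree + 1),
    Polynomial.C (eval x (homogeneousComponent k Q)) * Polynomial.X ^ k

lemma pX_eval (x : Fin 3 → ℝ) (t : ℝ) :
    (pX Q x).eval t = eval (fun i => t * x i) Q := by
  conv_rhs => rw [← sum_homogeneousComponent Q]
  rw [map_sum, pX, Polynomial.eval_finset_sum]
  refine Finset.sum_congr rfl fun k hk => ?_
  rw [Polynomial.eval_mul, Polynomial.eval_C, Polynomial.eval_pow, Polynomial.eval_X,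
    eval_homog (homogeneousComponent_isHomogeneous k Q) t x, mul_comm]

lemma pX_coeff_top (x : Fin 3 → ℝ) :
    (pX Q x).coeff Q.totalDegree = eval x (homogeneousComponent Q.totalDegree Q) := by
  rw [pX, Polynomial.finset_sum_coeff]
  simp only [Polynomial.coeff_C_mul, Polynomial.coeff_X_pow, mul_ite, mul_one, mul_zero]
  rw [Finset.sum_ite_eq (Finset.range (Q.totalDegree + 1)) Q.totalDegree]
  simp

/-- The top homogeneous component of a nonzero polynomial is nonzero. -/
lemma homog_top_ne_zero (hQ : Q ≠ 0) :
    homogeneousComponent Q.totalDegree Q ≠ 0 := by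
  obtain ⟨m, hm, hms⟩ := Q.support.exists_mem_eq_sup
    (Finset.nonempty_iff_ne_empty.mpr fun h => hQ (MvPolynomial.support_eq_empty.mp h)) fun m : Fin 3 →₀ ℕ => m.sum fun _ e => e
  intro h
  have hdm : m.degree = Q.totalDegree := by
    have h2 : Q.totalDegree = m.sum fun _ e => e := hms
    rw [h2]
    rfl
  have hc : coeff m (homogeneousComponent Q.totalDegree Q) = coeff m Q := by
    rw [coeff_homogeneousComponent, if_pos hdm]
  rw [h, coeff_zero] at hc
  exact mem_support_iff.mp hm hc.symm

end PolyWeightedAux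

open PolyWeightedAux MvPolynomial

theorem polynomial_weighted_integrable_eq_zero
    (Q : MvPolynomial (Fin 3) ℝ) (s δ : ℝ) (hs : 0 < s) (hδ0 : 0 ≤ δ) (hδ3 : δ < 3)
    (hint : Integrable
      (fun x : E3 => |MvPolynomial.eval (fun i => x i) Q| ^ s * (1 + ‖x‖) ^ (-δ))) :
    ∀ x : E3, MvPolynomial.eval (fun i => x i) Q = 0 := by
  by_contra hcon
  push_neg at hcon
  obtain ⟨x₀, hx₀⟩ := hcon
  have hQ : Q ≠ 0 := fun h => hx₀ (by rw [h, map_zero])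
  set d := Q.totalDegree with hd
  have hh0 : homogeneousComponent d Q ≠ 0 := homog_top_ne_zero Q hQ
  have hcont : Continuous fun x : E3 => eval (fun i => x i) Q :=
    (MvPolynomial.continuous_eval Q).comp (PiLp.continuous_ofLp (p := 2) (β := fun _ : Fin 3 => ℝ))
  set g : E3 → ENNReal := fun y => ENNReal.ofReal (|eval (fun i => y i) Q| ^ s) with hg
  have hgm : Measurable g :=
    ((hcont.abs.rpow_const fun x => Or.inr hs.le).measurable).ennreal_ofReal
  -- the finite total weighted integral
  set J := ∫⁻ y : E3, g y * ENNReal.ofReal ((1 + ‖y‖) ^ (-δ)) with hJ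
  have hJ_lt : J < ⊤ := by
    refine lt_of_le_of_lt (le_of_eq ?_) hint.lintegral_lt_top
    refine lintegral_congr fun y => ?_
    rw [← ENNReal.ofReal_mul (by positivity)]
  -- the annulus
  set A : Set E3 := {x | 1 ≤ ‖x‖ ∧ ‖x‖ ≤ 2} with hA
  have hAm : MeasurableSet A := by
    have : A = (fun x : E3 => ‖x‖) ⁻¹' (Set.Icc 1 2) := by
      ext x; simp [hA, Set.mem_Icc]
    rw [this]
    exact continuous_norm.measurable measurableSet_Icc
  have hApos : 0 < volume A := by
    have hsub : ball (EuclideanSpace.single (0 : Fin 3) (3/2 : ℝ)) (1/2) ⊆ A := by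
      intro y hy
      rw [mem_ball, dist_eq_norm] at hy
      have hn : ‖EuclideanSpace.single (0 : Fin 3) (3/2 : ℝ)‖ = 3/2 := by
        rw [EuclideanSpace.norm_single]; norm_num
      have h3 := norm_sub_norm_le (EuclideanSpace.single (0 : Fin 3) (3/2 : ℝ)) y
      rw [hn, norm_sub_rev] at h3
      have h2 : ‖y‖ ≤ 3/2 + 1/2 := by
        have h4 := norm_sub_norm_le y (EuclideanSpace.single (0 : Fin 3) (3/2 : ℝ))
        rw [hn] at h4
        linarith
      exact ⟨by linarith, by linarith⟩
    calc (0 : ENNReal) < volume (ball (EuclideanSpace.single (0 : Fin 3) (3/2 : ℝ)) (1/2)) :=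
          measure_ball_pos volume _ (by norm_num)
      _ ≤ volume A := measure_mono hsub
  -- the key scaling bound
  have key : ∀ n : ℕ, 1 ≤ n →
      ∫⁻ x in A, g ((n : ℝ) • x) ≤
        ENNReal.ofReal ((((n : ℝ)) ^ (3:ℕ))⁻¹ * (1 + 2 * (n : ℝ)) ^ δ) * J := by
    intro n hn
    have hnpos : (0 : ℝ) < n := by exact_mod_cast hn
    have hn0 : (n : ℝ) ≠ 0 := ne_of_gt hnpos
    set S : Set E3 := {y | (n : ℝ) ≤ ‖y‖ ∧ ‖y‖ ≤ 2 * n} with hS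
    have hSm : MeasurableSet S := by
      have : S = (fun y : E3 => ‖y‖) ⁻¹' (Set.Icc (n : ℝ) (2 * n)) := by
        ext y; simp [hS, Set.mem_Icc]
      rw [this]
      exact continuous_norm.measurable measurableSet_Icc
    have hpre : (((n : ℝ) • ·) ⁻¹' S) = A := by
      ext x
      simp only [Set.mem_preimage, hS, Set.mem_setOf_eq, hA, norm_smul, Real.norm_natCast]
      constructor
      · rintro ⟨h1, h2⟩
        refine ⟨le_of_mul_le_mul_left (by linarith [h1]) hnpos,
          le_of_mul_le_mul_left (by linarith [h2]) hnpos⟩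
      · rintro ⟨h1, h2⟩
        constructor
        · calc (n : ℝ) = n * 1 := (mul_one _).symm
            _ ≤ n * ‖x‖ := by gcongr
        · calc (n : ℝ) * ‖x‖ ≤ n * 2 := by gcongr
            _ = 2 * n := mul_comm _ _
    -- weight lower bound on S
    have hwb : ∀ y ∈ S, ENNReal.ofReal ((1 + 2 * (n:ℝ)) ^ (-δ)) * g y
        ≤ g y * ENNReal.ofReal ((1 + ‖y‖) ^ (-δ)) := by
      intro y hy
      rw [mul_comm]
      refine mul_le_mul_right (ENNReal.ofReal_le_ofReal ?_) _
      refine Real.rpow_le_rpow_of_nonpos ?_ ?_ (by linarith)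
      · positivity
      · linarith [hy.2]
    have step1 : ENNReal.ofReal ((1 + 2 * (n:ℝ)) ^ (-δ)) * ∫⁻ y in S, g y ≤ J := by
      rw [← lintegral_const_mul _ hgm]
      calc ∫⁻ y in S, ENNReal.ofReal ((1 + 2 * (n:ℝ)) ^ (-δ)) * g y
          ≤ ∫⁻ y in S, g y * ENNReal.ofReal ((1 + ‖y‖) ^ (-δ)) := setLIntegral_mono
            (hgm.mul ((continuous_const.add continuous_norm).rpow_const
              (fun y => Or.inl (by positivity : (0:ℝ) < 1 + ‖y‖).ne') |>.measurable.ennreal_ofReal)) hwb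
        _ ≤ J := by rw [hJ]; exact setLIntegral_le_lintegral _ _
    have hwpos : (0:ℝ) < (1 + 2 * (n:ℝ)) ^ (-δ) := by positivity
    have step2 : ∫⁻ y in S, g y ≤ ENNReal.ofReal ((1 + 2 * (n:ℝ)) ^ δ) * J := by
      have hne0 : ENNReal.ofReal ((1 + 2 * (n:ℝ)) ^ (-δ)) ≠ 0 := by
        simp [ENNReal.ofReal_eq_zero, not_le, hwpos]
      have hnetop : ENNReal.ofReal ((1 + 2 * (n:ℝ)) ^ (-δ)) ≠ ⊤ := ENNReal.ofReal_ne_top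
      have hinv : (ENNReal.ofReal ((1 + 2 * (n:ℝ)) ^ (-δ)))⁻¹
          = ENNReal.ofReal ((1 + 2 * (n:ℝ)) ^ δ) := by
        rw [← ENNReal.ofReal_inv_of_pos hwpos]
        congr 1
        rw [Real.rpow_neg (by positivity), inv_inv]
      calc ∫⁻ y in S, g y
          = (ENNReal.ofReal ((1 + 2 * (n:ℝ)) ^ (-δ)))⁻¹
            * (ENNReal.ofReal ((1 + 2 * (n:ℝ)) ^ (-δ)) * ∫⁻ y in S, g y) := by
            rw [← mul_assoc, ENNReal.inv_mul_cancel hne0 hnetop, one_mul]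
        _ ≤ (ENNReal.ofReal ((1 + 2 * (n:ℝ)) ^ (-δ)))⁻¹ * J := by gcongr
        _ = ENNReal.ofReal ((1 + 2 * (n:ℝ)) ^ δ) * J := by rw [hinv]
    -- scaling
    have hmap : Measure.map ((n:ℝ) • ·) (volume : Measure E3)
        = ENNReal.ofReal |(((n:ℝ) ^ Module.finrank ℝ E3)⁻¹)| • volume :=
      Measure.map_addHaar_smul volume hn0
    have hrank : Module.finrank ℝ E3 = 3 := finrank_euclideanSpace_fin
    have hscale : ∫⁻ x in A, g ((n:ℝ) • x)
        = ENNReal.ofReal (((n:ℝ) ^ (3:ℕ))⁻¹) * ∫⁻ y in S, g y := by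
      have h1 : ∫⁻ x in A, g ((n:ℝ) • x)
          = ∫⁻ y, g y ∂(Measure.map ((n:ℝ) • ·) (volume.restrict A)) :=
        (lintegral_map hgm (measurable_const_smul _)).symm
      rw [h1, ← hpre, ← Measure.restrict_map (measurable_const_smul _) hSm, hmap, hrank,
        Measure.restrict_smul, lintegral_smul_measure, abs_of_pos (by positivity), smul_eq_mul]
    rw [hscale]
    calc ENNReal.ofReal (((n:ℝ) ^ (3:ℕ))⁻¹) * ∫⁻ y in S, g y
        ≤ ENNReal.ofReal (((n:ℝ) ^ (3:ℕ))⁻¹) * (ENNReal.ofReal ((1 + 2 * (n:ℝ)) ^ δ) * J) := by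
          gcongr
      _ = ENNReal.ofReal ((((n:ℝ)) ^ (3:ℕ))⁻¹ * (1 + 2 * (n:ℝ)) ^ δ) * J := by
          rw [ENNReal.ofReal_mul (by positivity), mul_assoc]
  -- the upper bound tends to zero
  have hreal : Tendsto (fun n : ℕ => (((n:ℝ)) ^ (3:ℕ))⁻¹ * (1 + 2 * (n:ℝ)) ^ δ) atTop (𝓝 0) := by
    have h2 : Tendsto (fun r : ℝ => r ^ (δ - 3)) atTop (𝓝 0) := by
      have := tendsto_rpow_neg_atTop (y := 3 - δ) (by linarith)
      simpa [neg_sub] using this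
    have h3 : Tendsto (fun n : ℕ => (3:ℝ) ^ δ * ((n:ℝ) ^ (δ - 3))) atTop (𝓝 0) := by
      have := (h2.comp tendsto_natCast_atTop_atTop).const_mul ((3:ℝ) ^ δ)
      simpa using this
    refine squeeze_zero' ?_ ?_ h3
    · filter_upwards [eventually_ge_atTop 1] with n hn
      have : (0:ℝ) < n := by exact_mod_cast hn
      positivity
    · filter_upwards [eventually_ge_atTop 1] with n hn
      have hn1 : (1:ℝ) ≤ n := by exact_mod_cast hn
      have hnpos : (0:ℝ) < n := by linarith
      have hb1 : ((1:ℝ) + 2 * n) ^ δ ≤ (3 * (n:ℝ)) ^ δ :=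
        Real.rpow_le_rpow (by positivity) (by linarith) hδ0
      have hb2 : ((3:ℝ) * n) ^ δ = (3:ℝ) ^ δ * (n:ℝ) ^ δ :=
        Real.mul_rpow (by norm_num) (by positivity)
      have hb3 : (((n:ℝ)) ^ (3:ℕ))⁻¹ = (n:ℝ) ^ (-(3:ℝ)) := by
        rw [← Real.rpow_natCast (n:ℝ) 3, ← Real.rpow_neg hnpos.le]
        norm_num
      calc (((n:ℝ)) ^ (3:ℕ))⁻¹ * (1 + 2 * (n:ℝ)) ^ δ
          ≤ (((n:ℝ)) ^ (3:ℕ))⁻¹ * ((3:ℝ) ^ δ * (n:ℝ) ^ δ) := by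
            rw [hb2] at hb1
            have : (0:ℝ) ≤ (((n:ℝ)) ^ (3:ℕ))⁻¹ := by positivity
            exact mul_le_mul_of_nonneg_left hb1 this
        _ = (3:ℝ) ^ δ * ((n:ℝ) ^ (δ - 3)) := by
            rw [hb3, show (n:ℝ) ^ (-(3:ℝ)) * ((3:ℝ) ^ δ * (n:ℝ) ^ δ)
              = (3:ℝ) ^ δ * ((n:ℝ) ^ δ * (n:ℝ) ^ (-(3:ℝ))) from by ring,
              ← Real.rpow_add hnpos, show δ + -(3:ℝ) = δ - 3 from by ring]
  have hlim : Tendsto (fun n : ℕ => ∫⁻ x in A, g ((n:ℝ) • x)) atTop (𝓝 0) := by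
    have hb : Tendsto (fun n : ℕ =>
        ENNReal.ofReal ((((n:ℝ)) ^ (3:ℕ))⁻¹ * (1 + 2 * (n:ℝ)) ^ δ) * J) atTop (𝓝 0) := by
      have h0 : Tendsto (fun n : ℕ =>
          ENNReal.ofReal ((((n:ℝ)) ^ (3:ℕ))⁻¹ * (1 + 2 * (n:ℝ)) ^ δ)) atTop (𝓝 0) := by
        have := ENNReal.tendsto_ofReal hreal
        simpa using this
      have := ENNReal.Tendsto.mul_const h0 (Or.inr hJ_lt.ne)
      simpa using this
    refine tendsto_of_tendsto_of_tendsto_of_le_of_le' tendsto_const_nhds hb ?_ ?_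
    · exact Eventually.of_forall fun n => zero_le
    · filter_upwards [eventually_ge_atTop 1] with n hn
      exact key n hn
  -- Fatou
  have hgnm : ∀ n : ℕ, Measurable fun x : E3 => g ((n:ℝ) • x) :=
    fun n => hgm.comp (measurable_const_smul _)
  have hliminf0 : ∫⁻ x in A, liminf (fun n : ℕ => g ((n:ℝ) • x)) atTop = 0 := by
    apply le_antisymm _ zero_le
    calc ∫⁻ x in A, liminf (fun n : ℕ => g ((n:ℝ) • x)) atTop
        ≤ liminf (fun n : ℕ => ∫⁻ x in A, g ((n:ℝ) • x)) atTop :=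
          lintegral_liminf_le hgnm
      _ = 0 := hlim.liminf_eq
  have hmliminf : Measurable fun x : E3 => liminf (fun n : ℕ => g ((n:ℝ) • x)) atTop :=
    Measurable.liminf hgnm
  have hae0 : ∀ᵐ x ∂(volume.restrict A),
      liminf (fun n : ℕ => g ((n:ℝ) • x)) atTop = 0 := by
    have := (lintegral_eq_zero_iff hmliminf).mp hliminf0
    filter_upwards [this] with x hx using hx
  -- pointwise positivity of the liminf
  have haepos : ∀ᵐ x ∂(volume.restrict A),
      liminf (fun n : ℕ => g ((n:ℝ) • x)) atTop ≠ 0 := by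
    refine ae_restrict_of_ae ?_
    filter_upwards [ae_eval_ne_zero_E3 (homogeneousComponent d Q) hh0] with x hx
    have hevsmul : ∀ n : ℕ, g ((n:ℝ) • x)
        = ENNReal.ofReal (|eval (fun i => (n:ℝ) * x i) Q| ^ s) := by
      intro n
      have hfun : (fun i => ((n:ℝ) • x) i) = fun i => (n:ℝ) * x i :=
        funext fun i => by simp [PiLp.smul_apply, smul_eq_mul]
      rw [hg]
      simp only []
      rw [hfun]
    obtain ⟨ε, hε, hev⟩ : ∃ ε > 0, ∀ᶠ n : ℕ in atTop,
        ε ≤ |eval (fun i => (n:ℝ) * x i) Q| := by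
      rcases Nat.eq_zero_or_pos d with hd0 | hdpos
      · refine ⟨|eval (fun i => x i) (homogeneousComponent d Q)|, abs_pos.mpr hx,
          Eventually.of_forall fun n => ?_⟩
        have hpq : eval (fun i => (n:ℝ) * x i) Q = (pX Q (fun i => x i)).eval (n:ℝ) :=
          (pX_eval Q _ _).symm
        have hpX : pX Q (fun i => x i)
            = Polynomial.C (eval (fun i => x i) (homogeneousComponent d Q)) := by
          rw [pX, ← hd, hd0]
          simp
        rw [hpq, hpX, Polynomial.eval_C]
      · have hcoeff : (pX Q (fun i => x i)).coeff d ≠ 0 := by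
          rw [← hd] at *
          rw [pX_coeff_top]
          exact hx
        have hdeg : 0 < (pX Q (fun i => x i)).degree := by
          calc (0 : WithBot ℕ) < (d : WithBot ℕ) := by exact_mod_cast hdpos
            _ ≤ (pX Q (fun i => x i)).degree := Polynomial.le_degree_of_ne_zero hcoeff
        have htend := Polynomial.abs_tendsto_atTop _ hdeg
        have hev' := (htend.comp tendsto_natCast_atTop_atTop).eventually_ge_atTop 1
        refine ⟨1, one_pos, hev'.mono fun n hn => ?_⟩
        rw [Function.comp_apply, pX_eval] at hn
        exact hn
    have hlow : ENNReal.ofReal (ε ^ s) ≤ liminf (fun n : ℕ => g ((n:ℝ) • x)) atTop := by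
      have hevg : ∀ᶠ n : ℕ in atTop,
          ENNReal.ofReal (ε ^ s) ≤ g ((n:ℝ) • x) := by
        filter_upwards [hev] with n hn
        rw [hevsmul n]
        exact ENNReal.ofReal_le_ofReal (Real.rpow_le_rpow hε.le hn hs.le)
      calc ENNReal.ofReal (ε ^ s)
          = liminf (fun _ : ℕ => ENNReal.ofReal (ε ^ s)) atTop := (liminf_const _).symm
        _ ≤ liminf (fun n : ℕ => g ((n:ℝ) • x)) atTop := liminf_le_liminf hevg
    intro h0
    rw [h0] at hlow
    have : ENNReal.ofReal (ε ^ s) = 0 := le_antisymm hlow zero_le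
    rw [ENNReal.ofReal_eq_zero] at this
    have : (0:ℝ) < ε ^ s := Real.rpow_pos_of_pos hε s
    linarith
  -- contradiction
  have hfalse : ∀ᵐ _x ∂(volume.restrict A), False := by
    filter_upwards [hae0, haepos] with x h1 h2
    exact h2 h1
  have hA0 : volume.restrict A Set.univ = 0 := by
    have := hfalse
    rw [ae_iff] at this
    simpa using this
  rw [Measure.restrict_apply_univ] at hA0
  exact absurd hA0 hApos.ne'
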